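/- The function x ↦ h((1 − √x)/2) is concave on the interval [0,1], where h is the binary entropy function h(t) = −t·log₂ t − (1−t)·log₂(1−t) (with 0·log₂ 0 = 0). -/

import Mathlib

/-- The binary entropy function `h(t) = −t·log₂ t − (1−t)·log₂(1−t)`
(with the convention `0·log₂ 0 = 0`). -/
noncomputable def binEnt (t : ℝ) : ℝ :=
  -t * Real.logb 2 t - (1 - t) * Real.logb 2 (1 - t)

open Real Set

noncomputable def Laux (s : ℝ) : ℝ := Real.log (1 + s) - Real.log (1 - s)

lemma Laux_hasDeriv {s : ℝ} (hs : s ∈ Ioo (0:ℝ) 1) :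
    HasDerivAt Laux (1/(1+s) + 1/(1-s)) s := by
  obtain ⟨h0, h1⟩ := hs
  have h1p : (0:ℝ) < 1 + s := by linarith
  have h2p : (0:ℝ) < 1 - s := by linarith
  have d1 : HasDerivAt (fun u : ℝ => Real.log (1+u)) (1/(1+s)) s := by
    have := (Real.hasDerivAt_log (ne_of_gt h1p)).comp s ((hasDerivAt_id s).const_add 1)
    simpa [one_div, Function.comp_def] using this
  have d2 : HasDerivAt (fun u : ℝ => Real.log (1-u)) (-(1/(1-s))) s := by
    have := (Real.hasDerivAt_log (ne_of_gt h2p)).comp s ((hasDerivAt_id s).const_sub 1)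
    simpa [one_div, Function.comp_def] using this
  have := d1.sub d2
  have hL : Laux = (fun u : ℝ => Real.log (1+u)) - (fun u : ℝ => Real.log (1-u)) := by
    funext u; simp [Laux]
  rw [hL]
  simpa [sub_neg_eq_add] using this

lemma Laux_convex : ConvexOn ℝ (Ico (0:ℝ) 1) Laux := by
  apply MonotoneOn.convexOn_of_deriv (convex_Ico 0 1)
  · intro s hs
    have h1p : (1:ℝ) + s ≠ 0 := by nlinarith [hs.1, hs.2]
    have h2p : (1:ℝ) - s ≠ 0 := by nlinarith [hs.1, hs.2]
    have c1 : ContinuousAt (fun u : ℝ => Real.log (1+u)) s :=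
      (Real.continuousAt_log h1p).comp (by fun_prop)
    have c2 : ContinuousAt (fun u : ℝ => Real.log (1-u)) s :=
      (Real.continuousAt_log h2p).comp (by fun_prop)
    exact (c1.sub c2).continuousWithinAt
  · rw [interior_Ico]
    exact fun s hs => (Laux_hasDeriv hs).differentiableAt.differentiableWithinAt
  · rw [interior_Ico]
    intro a ha b hb hab
    rw [(Laux_hasDeriv ha).deriv, (Laux_hasDeriv hb).deriv]
    obtain ⟨ha0, ha1⟩ := ha
    obtain ⟨hb0, hb1⟩ := hb
    have e1 : 1/(1+a) + 1/(1-a) = 2/(1-a^2) := by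
      rw [div_add_div _ _ (by positivity : (1:ℝ)+a ≠ 0) (ne_of_gt (by linarith : (0:ℝ) < 1-a)),
        show (1:ℝ)-a^2 = (1+a)*(1-a) by ring]
      congr 1; ring
    have e2 : 1/(1+b) + 1/(1-b) = 2/(1-b^2) := by
      rw [div_add_div _ _ (by positivity : (1:ℝ)+b ≠ 0) (ne_of_gt (by linarith : (0:ℝ) < 1-b)),
        show (1:ℝ)-b^2 = (1+b)*(1-b) by ring]
      congr 1; ring
    rw [e1, e2, div_le_div_iff₀ (by nlinarith) (by nlinarith)]
    nlinarith

lemma Laux_slope {a b : ℝ} (ha : 0 < a) (hab : a ≤ b) (hb : b < 1) :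
    b * Laux a ≤ a * Laux b := by
  have hbpos : 0 < b := lt_of_lt_of_le ha hab
  have h0 : (0:ℝ) ∈ Ico (0:ℝ) 1 := ⟨le_refl 0, one_pos⟩
  have hbmem : b ∈ Ico (0:ℝ) 1 := ⟨hbpos.le, hb⟩
  have hq1 : (0:ℝ) ≤ 1 - a/b := by
    have : a/b ≤ 1 := (div_le_one hbpos).2 hab
    linarith
  have hq2 : (0:ℝ) ≤ a/b := by positivity
  have h := Laux_convex.2 h0 hbmem hq1 hq2 (by ring)
  have hL0 : Laux 0 = 0 := by simp [Laux]
  have harg : (1 - a/b) • (0:ℝ) + (a/b) • b = a := by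
    simp [smul_eq_mul]
    field_simp
  rw [harg, hL0] at h
  simp only [smul_eq_mul, mul_zero, zero_add] at h
  have := mul_le_mul_of_nonneg_left h hbpos.le
  calc b * Laux a ≤ b * (a/b * Laux b) := this
    _ = a * Laux b := by field_simp

lemma binEnt_hasDeriv {t : ℝ} (ht : t ∈ Ioo (0:ℝ) 1) :
    HasDerivAt binEnt ((Real.log (1-t) - Real.log t) / Real.log 2) t := by
  obtain ⟨ht0, ht1⟩ := ht
  have h1t : (0:ℝ) < 1 - t := by linarith
  have d1 : HasDerivAt (fun u : ℝ => u * Real.log u) (Real.log t + 1) t := by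
    have := (hasDerivAt_id t).mul (Real.hasDerivAt_log (ne_of_gt ht0))
    convert this using 1 <;> try rfl
    field_simp
    simp only [id]; ring
  have d0 : HasDerivAt (fun u : ℝ => u * Real.log u) (Real.log (1-t) + 1) (1-t) := by
    have := (hasDerivAt_id (1-t)).mul (Real.hasDerivAt_log (ne_of_gt h1t))
    convert this using 1 <;> try rfl
    field_simp
    simp only [id]; ring
  have d2 : HasDerivAt (fun u : ℝ => (1-u) * Real.log (1-u))
      (-(Real.log (1-t) + 1)) t := by
    have := d0.comp t ((hasDerivAt_id t).const_sub 1)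
    convert this using 1 <;> try rfl
    ring
  have dall : HasDerivAt
      (fun u : ℝ => (-(u * Real.log u) - (1-u) * Real.log (1-u)) / Real.log 2)
      ((-(Real.log t + 1) - -(Real.log (1-t) + 1)) / Real.log 2) t :=
    (d1.neg.sub d2).div_const _
  have heq : binEnt = fun u : ℝ =>
      (-(u * Real.log u) - (1-u) * Real.log (1-u)) / Real.log 2 := by
    funext u
    simp only [binEnt, Real.logb]
    ring
  rw [heq]
  convert dall using 1
  ring

noncomputable def phiAux (x : ℝ) : ℝ :=
  -(Laux (Real.sqrt x)) / (4 * Real.sqrt x * Real.log 2)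

lemma F_hasDeriv {x : ℝ} (hx : x ∈ Ioo (0:ℝ) 1) :
    HasDerivAt (fun x => binEnt ((1 - Real.sqrt x) / 2)) (phiAux x) x := by
  have hs0 : 0 < Real.sqrt x := Real.sqrt_pos.2 hx.1
  have hs1 : Real.sqrt x < 1 := by
    rw [show (1:ℝ) = Real.sqrt 1 by simp]
    exact Real.sqrt_lt_sqrt hx.1.le hx.2
  set s := Real.sqrt x with hsdef
  have hti : (1 - s)/2 ∈ Ioo (0:ℝ) 1 := ⟨by linarith, by linarith⟩
  have dsqrt : HasDerivAt Real.sqrt (1/(2*s)) x := Real.hasDerivAt_sqrt (ne_of_gt hx.1)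
  have dinner : HasDerivAt (fun x => (1 - Real.sqrt x)/2) (-(1/(2*s))/2) x :=
    (dsqrt.const_sub 1).div_const 2
  have hcomp := (binEnt_hasDeriv hti).comp x dinner
  convert hcomp using 1 <;> try rfl
  have h1 : 1 - (1-s)/2 = (1+s)/2 := by ring
  rw [h1, Real.log_div (by linarith) two_ne_zero, Real.log_div (by linarith) two_ne_zero]
  simp only [phiAux, Laux, ← hsdef]
  have hlog2 : Real.log 2 ≠ 0 := ne_of_gt (Real.log_pos one_lt_two)
  have hs' : s ≠ 0 := ne_of_gt hs0
  rw [div_eq_iff (by positivity : (4:ℝ) * s * Real.log 2 ≠ 0)]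
  field_simp
  ring

/-- The function `x ↦ h((1 − √x)/2)` is concave on `[0,1]`. -/
theorem concaveOn_binEnt_one_sub_sqrt_div_two :
    ConcaveOn ℝ (Set.Icc (0 : ℝ) 1) (fun x => binEnt ((1 - Real.sqrt x) / 2)) := by
  have hlog2 : 0 < Real.log 2 := Real.log_pos one_lt_two
  apply AntitoneOn.concaveOn_of_deriv (convex_Icc 0 1)
  · -- continuity
    have hg : Continuous (fun t : ℝ =>
        (-(t * Real.log t) - (1-t) * Real.log (1-t)) / Real.log 2) := by
      have h2 : Continuous (fun t : ℝ => (1-t) * Real.log (1-t)) :=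
        Real.continuous_mul_log.comp (continuous_const.sub continuous_id)
      exact (Real.continuous_mul_log.neg.sub h2).div_const _
    have heq : binEnt = fun u : ℝ =>
        (-(u * Real.log u) - (1-u) * Real.log (1-u)) / Real.log 2 := by
      funext u
      simp only [binEnt, Real.logb]
      ring
    rw [heq]
    exact (hg.comp ((continuous_const.sub Real.continuous_sqrt).div_const 2)).continuousOn
  · rw [interior_Icc]
    exact fun x hx => (F_hasDeriv hx).differentiableAt.differentiableWithinAt
  · rw [interior_Icc]
    intro x hx y hy hxy
    rw [(F_hasDeriv hx).deriv, (F_hasDeriv hy).deriv]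
    have hsx : 0 < Real.sqrt x := Real.sqrt_pos.2 hx.1
    have hsy1 : Real.sqrt y < 1 := by
      rw [show (1:ℝ) = Real.sqrt 1 by simp]
      exact Real.sqrt_lt_sqrt hy.1.le hy.2
    have hsxy : Real.sqrt x ≤ Real.sqrt y := Real.sqrt_le_sqrt hxy
    have hsy : 0 < Real.sqrt y := lt_of_lt_of_le hsx hsxy
    simp only [phiAux]
    rw [neg_div, neg_div, neg_le_neg_iff,
      div_le_div_iff₀ (by positivity) (by positivity)]
    have key := Laux_slope hsx hsxy hsy1
    nlinarith [mul_le_mul_of_nonneg_left key (by positivity : (0:ℝ) ≤ 4 * Real.log 2)]
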